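/- Every factor of length n of the word w_p (where w_p(m) = first nonzero base-p digit of m+1) occurring in some configuration of the associated subshift X_p already occurs in w_p at a position less than p^n; consequently X_p is an effective subshift. -/

import Mathlib

/-- The word `w` occurs in the bi-infinite configuration `c` at position `i`. -/
def OccursAt {α : Type*} (w : List α) (c : ℤ → α) (i : ℤ) : Prop :=
  ∀ j : Fin w.length, c (i + (j : ℕ)) = w.get j

/-- The word `w` appears (somewhere) in `c`. -/
def AppearsIn {α : Type*} (w : List α) (c : ℤ → α) : Prop :=
  ∃ i : ℤ, OccursAt w c i

/-- `w` is in the language of the set of configurations `X`. -/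
def InLang {α : Type*} (X : Set (ℤ → α)) (w : List α) : Prop :=
  ∃ c ∈ X, AppearsIn w c

/-- `X` is minimal: every word of its language appears in every configuration of `X`. -/
def MinimalLang {α : Type*} (X : Set (ℤ → α)) : Prop :=
  ∀ w : List α, InLang X w → ∀ c ∈ X, AppearsIn w c

/-- The set of configurations avoiding every word of `Fw`. -/
def Avoiders {α : Type*} (Fw : Set (List α)) : Set (ℤ → α) :=
  {c | ∀ w ∈ Fw, ¬ AppearsIn w c}

/-- `c` is periodic (its shift orbit is finite). -/
def PeriodicConf {α : Type*} (c : ℤ → α) : Prop :=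
  ∃ p : ℤ, p ≠ 0 ∧ ∀ i : ℤ, c (i + p) = c i

/-- `X` is shift-invariant. -/
def ShiftInv {α : Type*} (X : Set (ℤ → α)) : Prop :=
  ∀ c ∈ X, (fun i => c (i + 1)) ∈ X ∧ (fun i => c (i - 1)) ∈ X

/-- `X` is a subshift: closed (for the product of discrete topologies) and
shift-invariant. -/
def IsSubshift {α : Type*} (X : Set (ℤ → α)) : Prop :=
  @IsClosed _ (@Pi.topologicalSpace ℤ (fun _ => α) (fun _ => ⊥)) X ∧ ShiftInv X

/-- The first nonzero digit in the base-`p` expansion of `n` (reading from the least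
significant digit): `(n / p^k) % p` where `p^k` is the largest power of `p` dividing `n`. -/
def firstDigit (p n : ℕ) : ℕ := (n / p ^ padicValNat p n) % p

/-- The Toeplitz-type word `w_p`: its `i`-th letter is the first nonzero base-`p` digit
of `i + 1`. -/
def wp (p : ℕ) (i : ℕ) : ℕ := firstDigit p (i + 1)

/-- The finite word `w` occurs in `w_p` at position `i`. -/
def OccursAtW (p : ℕ) (w : List ℕ) (i : ℕ) : Prop :=
  ∀ j : Fin w.length, wp p (i + (j : ℕ)) = w.get j

/-- The subshift `X_p`: all bi-infinite configurations all of whose finite factors are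
factors of `w_p`. -/
def Xp (p : ℕ) : Set (ℤ → ℕ) :=
  {c | ∀ (i : ℤ) (n : ℕ), ∃ m : ℕ, ∀ j : ℕ, j < n → c (i + (j : ℕ)) = wp p (m + j)}

namespace Aux10


theorem padic_eq {p : ℕ} (hp : 2 ≤ p) {v q : ℕ} (hq : ¬ p ∣ q) :
    padicValNat p (p ^ v * q) = v := by
  have h1 : p ^ v ∣ p ^ v * q := dvd_mul_right _ _
  have h2 : ¬ p ^ (v + 1) ∣ p ^ v * q := by
    rintro ⟨c, hc⟩
    rw [pow_succ, mul_assoc] at hc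
    exact hq ⟨c, Nat.eq_of_mul_eq_mul_left (Nat.pos_of_ne_zero (by positivity)) hc⟩
  have hq0 : 0 < q := Nat.pos_of_ne_zero (by rintro rfl; exact hq (dvd_zero p))
  rw [padicValNat_def' (by omega) (by positivity)]
  exact multiplicity_eq_of_dvd_of_not_dvd h1 h2

theorem fd_char {p : ℕ} (hp : 2 ≤ p) {v q : ℕ} (hq : ¬ p ∣ q) :
    firstDigit p (p ^ v * q) = q % p := by
  rw [firstDigit, padic_eq hp hq, Nat.mul_div_cancel_left _ (Nat.pos_of_ne_zero (by positivity))]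

theorem decomp {p : ℕ} (hp : 2 ≤ p) {k : ℕ} (hk : k ≠ 0) :
    ∃ v q, ¬ p ∣ q ∧ k = p ^ v * q := by
  set v := padicValNat p k with hv
  obtain ⟨q, hq⟩ : p ^ v ∣ k := pow_padicValNat_dvd
  refine ⟨v, q, ?_, hq⟩
  intro hpq
  have hfin : FiniteMultiplicity p k :=
    Nat.finiteMultiplicity_iff.2 ⟨by omega, Nat.pos_of_ne_zero hk⟩
  have := hfin.not_pow_dvd_of_multiplicity_lt (m := v + 1)
    (by rw [← padicValNat_def' (by omega) hk]; omega)
  exact this (by rw [hq, pow_succ]; exact mul_dvd_mul (dvd_refl _) hpq)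

theorem fd_mod {p : ℕ} (hp : 2 ≤ p) {s a : ℕ} (h : a % p ^ s ≠ 0) :
    firstDigit p a = firstDigit p (a % p ^ s) := by
  obtain ⟨v, q, hq, hr⟩ := decomp hp h
  have hvq : 0 < q := Nat.pos_of_ne_zero (by rintro rfl; exact hq (dvd_zero p))
  have hvs : v < s := by
    have h1 : p ^ v ≤ a % p ^ s := by
      rw [hr]; exact Nat.le_mul_of_pos_right _ hvq
    have h2 : a % p ^ s < p ^ s := Nat.mod_lt _ (by positivity)
    exact (Nat.pow_lt_pow_iff_right (by omega)).1 (lt_of_le_of_lt h1 h2)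
  have ha : a = p ^ v * (p ^ (s - v) * (a / p ^ s) + q) := by
    have := Nat.mod_add_div a (p ^ s)
    rw [mul_add, ← mul_assoc, ← pow_add]
    rw [Nat.add_sub_cancel' (le_of_lt hvs)]
    omega
  have hq' : ¬ p ∣ (p ^ (s - v) * (a / p ^ s) + q) := by
    intro hd
    have h1 : p ∣ p ^ (s - v) * (a / p ^ s) :=
      Dvd.dvd.mul_right (dvd_pow_self p (by omega)) _
    exact hq ((Nat.dvd_add_right h1).1 hd)
  rw [hr, fd_char hp hq]
  conv_lhs => rw [ha, fd_char hp hq']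
  have h0 : (p ^ (s - v) * (a / p ^ s)) % p = 0 :=
    Nat.mod_eq_zero_of_dvd (Dvd.dvd.mul_right (dvd_pow_self p (by omega)) _)
  conv_lhs => rw [Nat.add_mod, h0]
  simp [Nat.mod_mod_of_dvd]

theorem npow_le {p : ℕ} (hp : 2 ≤ p) {n : ℕ} (hn : 1 ≤ n) : n ≤ p ^ (n - 1) := by
  have h1 : n - 1 < 2 ^ (n - 1) := Nat.lt_two_pow_self
  have h2 : (2:ℕ) ^ (n - 1) ≤ p ^ (n - 1) := Nat.pow_le_pow_left hp _
  omega

theorem subMod {P t u : ℕ} (hu : 0 < u) (huP : u ≤ P) (ht : 1 ≤ t) :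
    (P * t - u) % P = P - u := by
  obtain ⟨t', rfl⟩ : ∃ t', t = t' + 1 := ⟨t - 1, by omega⟩
  have h1 : P * (t' + 1) - u = P * t' + (P - u) := by rw [mul_add, mul_one]; omega
  rw [h1, Nat.mul_add_mod, Nat.mod_eq_of_lt (by omega)]

theorem keyC {p : ℕ} (hp : 2 ≤ p) (m n : ℕ) :
    ∃ m' < p ^ n, ∀ j < n, wp p (m + j) = wp p (m' + j) := by
  have hpn : 0 < p ^ n := by positivity
  by_cases h : ∀ j, j < n → (m + 1 + j) % p ^ n ≠ 0
  · refine ⟨m % p ^ n, Nat.mod_lt _ hpn, fun j hj => ?_⟩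
    have hmod : (m % p ^ n + j + 1) % p ^ n = (m + j + 1) % p ^ n := by
      rw [add_assoc, Nat.mod_add_mod, ← add_assoc]
    have h1 : (m + j + 1) % p ^ n ≠ 0 := by
      have := h j hj; rwa [show m + 1 + j = m + j + 1 by omega] at this
    show firstDigit p (m + j + 1) = firstDigit p (m % p ^ n + j + 1)
    conv_lhs => rw [fd_mod hp h1, ← hmod]
    exact (fd_mod hp (by rwa [hmod])).symm
  · push_neg at h
    obtain ⟨j0, hj0, hz⟩ := h
    have hn1 : 1 ≤ n := by omega
    set s := n - 1 with hs
    have hns : n ≤ p ^ s := npow_le hp hn1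
    have hk0 : m + 1 + j0 ≠ 0 := by omega
    obtain ⟨v, q, hq, hkvq⟩ := decomp hp hk0
    set d := q % p with hdd
    have hd : wp p (m + j0) = d := by
      rw [wp, show m + j0 + 1 = m + 1 + j0 by omega, hkvq, fd_char hp hq]
    have hd0 : d ≠ 0 := fun h0 => hq (Nat.dvd_of_mod_eq_zero h0)
    have hdp : d < p := Nat.mod_lt _ (by omega)
    have hvn : n ≤ v := by
      by_contra hlt
      push_neg at hlt
      have hdvd : p ^ (v + 1) ∣ m + 1 + j0 :=
        dvd_trans (pow_dvd_pow p (by omega)) (Nat.dvd_of_mod_eq_zero hz)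
      rw [hkvq, pow_succ] at hdvd
      exact hq ((mul_dvd_mul_iff_left (a := p ^ v) (by positivity)).1 hdvd)
    obtain ⟨t, ht⟩ : p ^ s ∣ m + 1 + j0 :=
      dvd_trans (pow_dvd_pow p (by omega)) (Nat.dvd_of_mod_eq_zero hz)
    have hps0 : 0 < p ^ s := by positivity
    have ht1 : 1 ≤ t := Nat.one_le_iff_ne_zero.mpr (by rintro rfl; simp at ht)
    have hdle : 1 + j0 ≤ d * p ^ s := by
      calc 1 + j0 ≤ n := by omega
        _ ≤ p ^ s := hns
        _ ≤ d * p ^ s := Nat.le_mul_of_pos_left _ (by omega)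
    refine ⟨d * p ^ s - (1 + j0), ?_, fun j hj => ?_⟩
    · have h1 : d * p ^ s ≤ (p - 1) * p ^ s := Nat.mul_le_mul_right _ (by omega)
      have h2 : (p - 1) * p ^ s < p * p ^ s := by
        exact (Nat.mul_lt_mul_right hps0).2 (by omega)
      have h3 : p * p ^ s = p ^ n := by
        rw [show n = s + 1 by omega, pow_succ, mul_comm]
      omega
    · set m' := d * p ^ s - (1 + j0) with hm'def
      have hm' : m' + (1 + j0) = d * p ^ s := Nat.sub_add_cancel hdle
      show firstDigit p (m + j + 1) = firstDigit p (m' + j + 1)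
      rcases lt_trichotomy j j0 with hlt | rfl | hgt
      · set u := j0 - j with hu
        have hu0 : 0 < u := by omega
        have hu2 : u < p ^ s := lt_of_lt_of_le (by omega) hns
        have hma : m + j + 1 = p ^ s * t - u := by omega
        have hmb : m' + j + 1 = p ^ s * d - u := by
          rw [mul_comm (p ^ s) d]; omega
        have hra : (m + j + 1) % p ^ s = p ^ s - u := by
          rw [hma, subMod hu0 (by omega) ht1]
        have hrb : (m' + j + 1) % p ^ s = p ^ s - u := by
          rw [hmb, subMod hu0 (by omega) (by omega)]
        have hA : (m + j + 1) % p ^ s ≠ 0 := by omega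
        have hB : (m' + j + 1) % p ^ s ≠ 0 := by omega
        rw [fd_mod hp hA, fd_mod hp hB, hra, hrb]
      · show wp p (m + j) = firstDigit p (m' + j + 1)
        rw [hd]
        have hmj : m' + j + 1 = p ^ s * d := by rw [mul_comm (p ^ s) d]; omega
        have hpd : ¬ p ∣ d := fun hdvd =>
          absurd (Nat.le_of_dvd (by omega) hdvd) (not_le.2 hdp)
        rw [hmj, fd_char hp hpd, Nat.mod_eq_of_lt hdp]

      · set u := j - j0 with hu
        have hu0 : 0 < u := by omega
        have hu2 : u < p ^ s := lt_of_lt_of_le (by omega) hns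
        have hma : m + j + 1 = p ^ s * t + u := by omega
        have hmb : m' + j + 1 = p ^ s * d + u := by rw [mul_comm (p ^ s) d]; omega
        have hra : (m + j + 1) % p ^ s = u := by
          rw [hma, Nat.mul_add_mod, Nat.mod_eq_of_lt hu2]
        have hrb : (m' + j + 1) % p ^ s = u := by
          rw [hmb, Nat.mul_add_mod, Nat.mod_eq_of_lt hu2]
        have hA : (m + j + 1) % p ^ s ≠ 0 := by omega
        have hB : (m' + j + 1) % p ^ s ≠ 0 := by omega
        rw [fd_mod hp hA, fd_mod hp hB, hra, hrb]




def fdl (p m : ℕ) : ℕ :=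
  ((List.range (m + 2)).map (fun j => (m + 1) / p ^ j % p)).foldl
    (fun a d => if a = 0 then d else a) 0

theorem foldl_stay (l : List ℕ) {a : ℕ} (ha : a ≠ 0) :
    l.foldl (fun a d => if a = 0 then d else a) a = a := by
  induction l with
  | nil => rfl
  | cons x xs ih => simp [ha, ih]

theorem foldl_first (g : ℕ → ℕ) {v : ℕ} (hvg : g v ≠ 0) (h0 : ∀ j < v, g j = 0)
    {N : ℕ} (hN : v < N) :
    ((List.range N).map g).foldl (fun a d => if a = 0 then d else a) 0 = g v := by
  induction N with
  | zero => omega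
  | succ N ih =>
    rw [List.range_succ, List.map_append, List.foldl_append]
    rcases Nat.lt_or_ge v N with h | h
    · rw [ih h]; simp [hvg]
    · have hv : v = N := by omega
      subst hv
      have hzero : ∀ M, M ≤ v → ((List.range M).map g).foldl
          (fun a d => if a = 0 then d else a) 0 = 0 := by
        intro M
        induction M with
        | zero => intro _; rfl
        | succ M ihM =>
          intro hM
          rw [List.range_succ, List.map_append, List.foldl_append, ihM (by omega)]
          simp [h0 M (by omega)]
      rw [hzero v le_rfl]; simp

theorem fdl_eq_wp {p : ℕ} (hp : 2 ≤ p) (m : ℕ) : fdl p m = wp p m := by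
  obtain ⟨v, q, hq, hk⟩ := decomp hp (k := m + 1) (by omega)
  have hq0 : 0 < q := Nat.pos_of_ne_zero (by rintro rfl; exact hq (dvd_zero p))
  have hgv : (m + 1) / p ^ v % p = q % p := by
    rw [hk, Nat.mul_div_cancel_left _ (by positivity)]
  have hgv0 : (m + 1) / p ^ v % p ≠ 0 := by
    rw [hgv]; exact fun h0 => hq (Nat.dvd_of_mod_eq_zero h0)
  have h0 : ∀ j < v, (m + 1) / p ^ j % p = 0 := by
    intro j hj
    have : m + 1 = p ^ j * (p ^ (v - j) * q) := by
      rw [hk, ← mul_assoc, ← pow_add, Nat.add_sub_cancel' (le_of_lt hj)]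
    rw [this, Nat.mul_div_cancel_left _ (by positivity)]
    exact Nat.mod_eq_zero_of_dvd (Dvd.dvd.mul_right (dvd_pow_self p (by omega)) _)
  have hvm : v < m + 2 := by
    have h1 : v < 2 ^ v := Nat.lt_two_pow_self
    have h2 : (2:ℕ) ^ v ≤ p ^ v := Nat.pow_le_pow_left hp _
    have h3 : p ^ v ≤ p ^ v * q := Nat.le_mul_of_pos_right _ hq0
    omega
  rw [fdl, foldl_first (fun j => (m + 1) / p ^ j % p) hgv0 h0 hvm, hgv, wp, hk, fd_char hp hq]

theorem orFold (g : ℕ → Bool) (N : ℕ) :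
    (((List.range N).map g).foldl (· || ·) false = true) ↔ ∃ i < N, g i = true := by
  induction N with
  | zero => rw [List.range_zero]; simp
  | succ N ih =>
    rw [List.range_succ, List.map_append, List.foldl_append]
    simp only [List.map_cons, List.map_nil, List.foldl_cons, List.foldl_nil, Bool.or_eq_true, ih]
    constructor
    · rintro (⟨i, hi, hgi⟩ | hN)
      · exact ⟨i, by omega, hgi⟩
      · exact ⟨N, by omega, hN⟩
    · rintro ⟨i, hi, hgi⟩
      rcases Nat.lt_or_ge i N with h | h
      · exact Or.inl ⟨i, h, hgi⟩
      · exact Or.inr (by rw [show N = i by omega]; exact hgi)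

theorem andFold (g : ℕ → Bool) (N : ℕ) :
    (((List.range N).map g).foldl (· && ·) true = true) ↔ ∀ j < N, g j = true := by
  induction N with
  | zero => rw [List.range_zero]; simp
  | succ N ih =>
    rw [List.range_succ, List.map_append, List.foldl_append]
    simp only [List.map_cons, List.map_nil, List.foldl_cons, List.foldl_nil, Bool.and_eq_true, ih]
    constructor
    · rintro ⟨h1, h2⟩ j hj
      rcases Nat.lt_or_ge j N with h | h
      · exact h1 j h
      · rw [show j = N by omega]; exact h2
    · intro h
      exact ⟨fun j hj => h j (by omega), h N (by omega)⟩

def fBool (p : ℕ) (w : List ℕ) : Bool :=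
  ((List.range (p ^ w.length)).map (fun i =>
    ((List.range w.length).map (fun j => fdl p (i + j) == w.getD j 0)).foldl
      (· && ·) true)).foldl (· || ·) false

theorem occursAtW_iff {p : ℕ} {w : List ℕ} {i : ℕ} :
    OccursAtW p w i ↔ ∀ j < w.length, wp p (i + j) = w.getD j 0 := by
  constructor
  · intro h j hj
    rw [List.getD_eq_getElem _ _ hj]
    exact h ⟨j, hj⟩
  · intro h j
    have := h j j.isLt
    rwa [List.getD_eq_getElem _ _ j.isLt] at this

theorem fBool_iff {p : ℕ} (hp : 2 ≤ p) (w : List ℕ) :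
    fBool p w = true ↔ ∃ i < p ^ w.length, OccursAtW p w i := by
  rw [fBool, orFold]
  refine exists_congr fun i => and_congr_right fun _ => ?_
  rw [andFold, occursAtW_iff]
  refine forall_congr' fun j => imp_congr_right fun hj => ?_
  rw [beq_iff_eq, fdl_eq_wp hp]

theorem primrec_fBool (p : ℕ) : Primrec (fBool p) := by
  have hpow : Primrec₂ (fun a b : ℕ => a ^ b) := Primrec₂.unpaired'.1 Nat.Primrec.pow
  have hfdl : Primrec (fdl p) := by
    have hg : Primrec₂ (fun (m j : ℕ) => (m + 1) / p ^ j % p) :=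
      Primrec₂.mk <| Primrec.nat_mod.comp
        (Primrec.nat_div.comp (Primrec.succ.comp Primrec.fst)
          (hpow.comp (Primrec.const p) Primrec.snd))
        (Primrec.const p)
    have hmap : Primrec fun m : ℕ => (List.range (m + 2)).map fun j => (m + 1) / p ^ j % p :=
      Primrec.list_map (Primrec.list_range.comp (Primrec.succ.comp Primrec.succ)) hg
    have hh : Primrec₂ (fun (_ : ℕ) (x : ℕ × ℕ) => if x.1 = 0 then x.2 else x.1) :=
      Primrec₂.mk <| Primrec.ite
        (Primrec.eq.comp (Primrec.fst.comp Primrec.snd) (Primrec.const 0))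
        (Primrec.snd.comp Primrec.snd) (Primrec.fst.comp Primrec.snd)
    exact (Primrec.list_foldl hmap (Primrec.const 0) hh).of_eq fun m => rfl
  have hinner : Primrec₂ (fun (w : List ℕ) (i : ℕ) =>
      ((List.range w.length).map (fun j => fdl p (i + j) == w.getD j 0)).foldl
        (· && ·) true) := by
    have hg : Primrec₂ (fun (a : List ℕ × ℕ) (j : ℕ) => fdl p (a.2 + j) == a.1.getD j 0) :=
      Primrec₂.mk <| Primrec.beq.comp
        (hfdl.comp (Primrec.nat_add.comp (Primrec.snd.comp Primrec.fst) Primrec.snd))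
        ((Primrec.list_getD 0).comp (Primrec.fst.comp Primrec.fst) Primrec.snd)
    have hmap : Primrec fun a : List ℕ × ℕ =>
        (List.range a.1.length).map fun j => fdl p (a.2 + j) == a.1.getD j 0 :=
      Primrec.list_map (Primrec.list_range.comp (Primrec.list_length.comp Primrec.fst)) hg
    have hh : Primrec₂ (fun (_ : List ℕ × ℕ) (x : Bool × Bool) => x.1 && x.2) :=
      Primrec₂.mk <| Primrec.and.comp (Primrec.fst.comp Primrec.snd)
        (Primrec.snd.comp Primrec.snd)
    exact Primrec₂.mk
      ((Primrec.list_foldl hmap (Primrec.const true) hh).of_eq fun a => rfl)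
  have hmapO : Primrec fun w : List ℕ =>
      (List.range (p ^ w.length)).map fun i =>
        ((List.range w.length).map (fun j => fdl p (i + j) == w.getD j 0)).foldl
          (· && ·) true :=
    Primrec.list_map
      (Primrec.list_range.comp (hpow.comp (Primrec.const p) Primrec.list_length)) hinner
  have hh : Primrec₂ (fun (_ : List ℕ) (x : Bool × Bool) => x.1 || x.2) :=
    Primrec₂.mk <| Primrec.or.comp (Primrec.fst.comp Primrec.snd)
      (Primrec.snd.comp Primrec.snd)
  exact (Primrec.list_foldl hmapO (Primrec.const false) hh).of_eq fun w => rfl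

end Aux10

/-- Every length-`n` factor of a configuration of `X_p` already occurs in `w_p` at some
position `< p^n`; consequently the factor language of `X_p` is decidable, so `X_p` is an
effective subshift. -/
theorem stmt10 (p : ℕ) (hp : 2 ≤ p) :
    (∀ c ∈ Xp p, ∀ (i : ℤ) (n : ℕ),
      ∃ m : ℕ, m < p ^ n ∧ ∀ j : ℕ, j < n → c (i + (j : ℕ)) = wp p (m + j)) ∧
    ComputablePred (fun w : List ℕ => ∃ i : ℕ, OccursAtW p w i) := by
  constructor
  · intro c hc i n
    obtain ⟨m, hm⟩ := hc i n
    obtain ⟨m', hlt, hag⟩ := Aux10.keyC hp m n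
    exact ⟨m', hlt, fun j hj => (hm j hj).trans (hag j hj)⟩
  · rw [ComputablePred.computable_iff]
    refine ⟨Aux10.fBool p, (Aux10.primrec_fBool p).to_comp, funext fun w => propext ?_⟩
    constructor
    · rintro ⟨i, hi⟩
      obtain ⟨m', hlt, hag⟩ := Aux10.keyC hp i w.length
      have hocc : OccursAtW p w m' := fun j => ((hag j j.isLt).symm).trans (hi j)
      exact (Aux10.fBool_iff hp w).2 ⟨m', hlt, hocc⟩
    · intro h
      obtain ⟨i, _, hi⟩ := (Aux10.fBool_iff hp w).1 h
      exact ⟨i, hi⟩
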